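/- Let X be a nonempty finite set, n ≥ 1, F : X → ℝⁿ, and let M be a partial matching on X, i.e., a collection of pairwise-disjoint unordered pairs of distinct elements of X. Define F' : X → ℝⁿ by F'(x) = (F(x) + F(y))/2 whenever {x,y} ∈ M, and F'(x) = F(x) if x is not covered by M, and let μ = (1/|X|)·∑_{x∈X} F(x). Then ∑_{x∈X} ‖F(x) − μ‖² − ∑_{x∈X} ‖F'(x) − μ‖² ≥ (1/2)·∑_{{x,y}∈M} ‖F(x) − F(y)‖², where ‖·‖ is the Euclidean norm on ℝⁿ. -/
import Mathlib


/-!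
STATEMENT 16 (potential reduction by matching, Lemma C.7 / KRV Lemma 3.3):
Let `X` be a nonempty finite set, `n ≥ 1`, `F : X → ℝⁿ`, and `M` a partial matching
on `X` (pairwise-disjoint unordered pairs of distinct elements). Let `F'` average the
vectors of matched pairs and fix unmatched points, and let `μ` be the mean of `F`.
Then `∑_x ‖F(x) − μ‖² − ∑_x ‖F'(x) − μ‖² ≥ (1/2)·∑_{{x,y}∈M} ‖F(x) − F(y)‖²`.
-/

open Finset

lemma matching_key {E : Type*} [NormedAddCommGroup E] [InnerProductSpace ℝ E]
    (u v w : E) :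
    ‖u - w‖ ^ 2 + ‖v - w‖ ^ 2 - 2 * ‖(2 : ℝ)⁻¹ • (u + v) - w‖ ^ 2
      = (1 / 2) * ‖u - v‖ ^ 2 := by
  have h : (2 : ℝ)⁻¹ • (u + v) - w = (2 : ℝ)⁻¹ • ((u - w) + (v - w)) := by
    rw [smul_add, smul_add]
    module
  have h2 : u - v = (u - w) - (v - w) := by abel
  rw [h, h2, norm_smul]
  simp only [norm_inv, Real.norm_ofNat]
  have e1 := norm_add_sq_real (u - w) (v - w)
  have e2 := norm_sub_sq_real (u - w) (v - w)
  linear_combination (-1/2 : ℝ) * e1 + (-1/2 : ℝ) * e2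

theorem matching_potential_reduction
    {X : Type*} [Fintype X] [DecidableEq X] [Nonempty X] {n : ℕ} (hn : 1 ≤ n)
    (F F' : X → EuclideanSpace ℝ (Fin n))
    (M : Finset (Sym2 X))
    -- M consists of pairs of distinct elements
    (hdiag : ∀ p ∈ M, ¬ p.IsDiag)
    -- the pairs of M are pairwise disjoint
    (hdisj : ∀ p ∈ M, ∀ q ∈ M, p ≠ q → ∀ x : X, x ∈ p → x ∉ q)
    -- F' averages the vectors of matched pairs
    (hmatch : ∀ x y : X, s(x, y) ∈ M → F' x = (2 : ℝ)⁻¹ • (F x + F y))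
    -- F' fixes unmatched points
    (hfix : ∀ x : X, (∀ p ∈ M, x ∉ p) → F' x = F x) :
    (1 / 2) * ∑ p ∈ M,
        Sym2.lift ⟨fun x y => ‖F x - F y‖ ^ 2, fun x y => by simp [norm_sub_rev]⟩ p ≤
      (∑ x : X, ‖F x - (Fintype.card X : ℝ)⁻¹ • ∑ y : X, F y‖ ^ 2) -
      (∑ x : X, ‖F' x - (Fintype.card X : ℝ)⁻¹ • ∑ y : X, F y‖ ^ 2) := by
  classical
  set μ : EuclideanSpace ℝ (Fin n) := (Fintype.card X : ℝ)⁻¹ • ∑ y : X, F y with hμ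
  set g : X → ℝ := fun x => ‖F x - μ‖ ^ 2 - ‖F' x - μ‖ ^ 2 with hg
  have hsum : (∑ x : X, ‖F x - μ‖ ^ 2) - (∑ x : X, ‖F' x - μ‖ ^ 2) = ∑ x : X, g x := by
    rw [← Finset.sum_sub_distrib]
  rw [hsum]
  set f : Sym2 X → Finset X :=
    Sym2.lift ⟨fun a b => {a, b}, fun a b => by simp [Finset.pair_comm]⟩ with hf
  have hmemf : ∀ (p : Sym2 X) (x : X), x ∈ f p ↔ x ∈ p := by
    intro p x
    induction p using Sym2.ind with
    | _ a b => simp [hf, Sym2.mem_iff]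
  have hdisjf : (M : Set (Sym2 X)).PairwiseDisjoint f := by
    intro p hp q hq hpq
    simp only [Function.onFun]
    rw [Finset.disjoint_left]
    intro x hx hx'
    exact hdisj p hp q hq hpq x ((hmemf p x).1 hx) ((hmemf q x).1 hx')
  have hbi : ∑ x ∈ M.biUnion f, g x = ∑ p ∈ M, ∑ x ∈ f p, g x :=
    Finset.sum_biUnion hdisjf
  have huniv : ∑ x : X, g x = ∑ x ∈ M.biUnion f, g x := by
    symm
    apply Finset.sum_subset (Finset.subset_univ _)
    intro x _ hx
    have hxun : ∀ p ∈ M, x ∉ p := by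
      intro p hp hxp
      exact hx (Finset.mem_biUnion.2 ⟨p, hp, (hmemf p x).2 hxp⟩)
    simp [hg, hfix x hxun]
  rw [huniv, hbi, Finset.mul_sum]
  apply Finset.sum_le_sum
  intro p hp
  induction p using Sym2.ind with
  | _ a b =>
    have hab : a ≠ b := by
      intro h
      exact hdiag _ hp (by simp [h])
    have hfa : F' a = (2 : ℝ)⁻¹ • (F a + F b) := hmatch a b hp
    have hfb : F' b = (2 : ℝ)⁻¹ • (F a + F b) := by
      rw [hmatch b a (by rwa [Sym2.eq_swap]), add_comm]
    have hfp : f s(a, b) = {a, b} := by simp [hf]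
    rw [hfp, Finset.sum_pair hab, Sym2.lift_mk]
    simp only [hg, hfa, hfb]
    have := matching_key (F a) (F b) μ
    linarith [this]
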